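/- (Pólya's Positivstellensatz) If a real form f ∈ ℝ[x₁,…,xₙ] is strictly positive at every point of the standard simplex Δₙ = {x : xᵢ ≥ 0, x₁+⋯+xₙ = 1}, then there exists a nonnegative integer m such that all coefficients of the polynomial (x₁+⋯+xₙ)^m · f are strictly positive. -/

import Mathlib

open MvPolynomial Finset

lemma polya_abs_prod_sub_prod {ι : Type*} (s : Finset ι) (u v : ι → ℝ)
    (hu : ∀ i ∈ s, |u i| ≤ 1) (hv : ∀ i ∈ s, |v i| ≤ 1) :
    |∏ i ∈ s, u i - ∏ i ∈ s, v i| ≤ ∑ i ∈ s, |u i - v i| := by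
  induction s using Finset.cons_induction with
  | empty => simp
  | cons a s ha ih =>
    rw [prod_cons, prod_cons, sum_cons]
    have hvp : |∏ i ∈ s, v i| ≤ 1 := by
      rw [abs_prod]
      exact Finset.prod_le_one (fun i hi => abs_nonneg _)
        (fun i hi => hv i (mem_cons_of_mem hi))
    have hua : |u a| ≤ 1 := hu a (mem_cons_self a s)
    have key : u a * ∏ i ∈ s, u i - v a * ∏ i ∈ s, v i
        = u a * (∏ i ∈ s, u i - ∏ i ∈ s, v i) + (u a - v a) * ∏ i ∈ s, v i := by ring
    rw [key]
    calc |u a * (∏ i ∈ s, u i - ∏ i ∈ s, v i) + (u a - v a) * ∏ i ∈ s, v i|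
        ≤ |u a * (∏ i ∈ s, u i - ∏ i ∈ s, v i)| + |(u a - v a) * ∏ i ∈ s, v i| := abs_add_le _ _
      _ = |u a| * |∏ i ∈ s, u i - ∏ i ∈ s, v i| + |u a - v a| * |∏ i ∈ s, v i| := by
          rw [abs_mul, abs_mul]
      _ ≤ 1 * (∑ i ∈ s, |u i - v i|) + |u a - v a| * 1 :=
          add_le_add
            (mul_le_mul hua (ih (fun i hi => hu i (mem_cons_of_mem hi))
              (fun i hi => hv i (mem_cons_of_mem hi))) (abs_nonneg _) zero_le_one)
            (mul_le_mul_of_nonneg_left hvp (abs_nonneg _))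
      _ = |u a - v a| + ∑ i ∈ s, |u i - v i| := by ring

lemma polya_cast_descFactorial (a k : ℕ) :
    ((a.descFactorial k : ℕ) : ℝ) = ∏ j ∈ range k, ((a : ℝ) - j) := by
  by_cases h : k ≤ a
  · rw [Nat.descFactorial_eq_prod_range]
    push_cast
    refine Finset.prod_congr rfl fun j hj => ?_
    rw [Nat.cast_sub (le_trans (Nat.le_of_lt_succ (Nat.lt_succ_of_lt (mem_range.mp hj))) h)]
  · push_neg at h
    rw [Nat.descFactorial_eq_zero_iff_lt.mpr h, Nat.cast_zero]
    refine (Finset.prod_eq_zero (mem_range.mpr h) ?_).symm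
    simp

lemma polya_support_degree {n d : ℕ} {f : MvPolynomial (Fin n) ℝ} (hf : f.IsHomogeneous d)
    {β : Fin n →₀ ℕ} (hβ : β ∈ f.support) : (∑ i, β i) = d := by
  have h1 : β.degree = d := by
    by_contra h
    exact (mem_support_iff.mp hβ) (hf.coeff_eq_zero h)
  rw [← h1, Finsupp.degree]
  exact (Finset.sum_subset (Finset.subset_univ _)
    (fun i _ hi => Finsupp.notMem_support_iff.mp hi)).symm

lemma polya_coeff_sum_X_pow {n : ℕ} (N : ℕ) (γ : Fin n →₀ ℕ) :
    coeff γ ((∑ i, X i : MvPolynomial (Fin n) ℝ) ^ N) =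
      if (∑ i, γ i) = N then (Nat.multinomial Finset.univ γ : ℝ) else 0 := by
  rw [Finset.sum_pow_eq_sum_piAntidiag, coeff_sum]
  have hterm : ∀ k : Fin n → ℕ,
      coeff γ ((Nat.multinomial Finset.univ k : MvPolynomial (Fin n) ℝ) * ∏ i, X i ^ k i)
        = if k = ⇑γ then (Nat.multinomial Finset.univ k : ℝ) else 0 := by
    intro k
    have hmon : (∏ i, (X i : MvPolynomial (Fin n) ℝ) ^ k i)
        = monomial (Finsupp.equivFunOnFinite.symm k) 1 := by
      rw [← prod_X_pow_eq_monomial]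
      refine (Finset.prod_subset (Finset.subset_univ _) ?_).symm
      intro i _ hi
      have : (Finsupp.equivFunOnFinite.symm k) i = 0 := by
        simpa [Finsupp.mem_support_iff] using hi
      simp [Finsupp.equivFunOnFinite] at this ⊢
      rw [show k i = 0 from this, pow_zero]
    have hcast : (Nat.multinomial Finset.univ k : MvPolynomial (Fin n) ℝ)
        = C ((Nat.multinomial Finset.univ k : ℝ)) := by
      rfl
    rw [hmon, hcast, coeff_C_mul, coeff_monomial]
    have : (Finsupp.equivFunOnFinite.symm k = γ) ↔ (k = ⇑γ) := by
      constructor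
      · intro h; ext i; rw [← h]; rfl
      · intro h; ext i; simp [h, Finsupp.equivFunOnFinite]
    by_cases h : k = ⇑γ
    · rw [if_pos (this.mpr h), if_pos h, mul_one]
    · rw [if_neg (fun hh => h (this.mp hh)), if_neg h, mul_zero]
  by_cases hγ : (∑ i, γ i) = N
  · rw [if_pos hγ]
    rw [Finset.sum_eq_single_of_mem (⇑γ)]
    · rw [hterm, if_pos rfl]
    · rw [mem_piAntidiag]
      exact ⟨hγ, fun i _ => mem_univ i⟩
    · intro k hk hne
      rw [hterm, if_neg hne]
  · rw [if_neg hγ]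
    refine Finset.sum_eq_zero fun k hk => ?_
    rw [hterm]
    rw [mem_piAntidiag] at hk
    have : k ≠ ⇑γ := by
      rintro rfl
      exact hγ hk.1
    rw [if_neg this]

lemma polya_coeff_formula {n d N : ℕ} (f : MvPolynomial (Fin n) ℝ) (hf : f.IsHomogeneous d)
    (α : Fin n →₀ ℕ) (hα : (∑ i, α i) = d + N) :
    (∏ i, ((α i).factorial : ℝ)) * coeff α ((∑ i, X i : MvPolynomial (Fin n) ℝ) ^ N * f)
      = (N.factorial : ℝ) *
        ∑ β ∈ f.support, coeff β f * ∏ i, ((α i).descFactorial (β i) : ℝ) := by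
  conv_lhs => rw [← support_sum_monomial_coeff f, Finset.mul_sum, coeff_sum]
  rw [Finset.mul_sum, Finset.mul_sum]
  refine Finset.sum_congr rfl fun β hβ => ?_
  rw [coeff_mul_monomial']
  by_cases hle : β ≤ α
  · rw [if_pos hle]
    have hle' : ∀ i, β i ≤ α i := fun i => hle i
    have hsub : ∀ i, (α - β) i = α i - β i := fun i => Finsupp.tsub_apply α β i
    have hsumsub : (∑ i, (α - β) i) = N := by
      have h2 : (∑ i, ((α - β) i + β i)) = ∑ i, α i := by
        refine Finset.sum_congr rfl fun i _ => ?_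
        rw [hsub i, Nat.sub_add_cancel (hle' i)]
      rw [Finset.sum_add_distrib, polya_support_degree hf hβ, hα] at h2
      omega
    rw [polya_coeff_sum_X_pow, if_pos hsumsub]
    -- nat identity
    have key : (∏ i, (α i).factorial) * Nat.multinomial Finset.univ ⇑(α - β)
        = N.factorial * ∏ i, (α i).descFactorial (β i) := by
      have h1 : (∏ i, (α i).factorial)
          = (∏ i, ((α - β) i).factorial) * ∏ i, (α i).descFactorial (β i) := by
        rw [← Finset.prod_mul_distrib]
        refine Finset.prod_congr rfl fun i _ => ?_
        rw [hsub i, Nat.factorial_mul_descFactorial (hle' i)]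
      rw [h1, mul_assoc, mul_comm (∏ i, (α i).descFactorial (β i)), ← mul_assoc,
        Nat.multinomial_spec, hsumsub]
    have keyR : (∏ i, ((α i).factorial : ℝ)) * (Nat.multinomial Finset.univ ⇑(α - β) : ℝ)
        = (N.factorial : ℝ) * ∏ i, ((α i).descFactorial (β i) : ℝ) := by
      have := congrArg (fun m : ℕ => (m : ℝ)) key
      push_cast at this
      exact this
    calc (∏ i, ((α i).factorial : ℝ))
          * ((Nat.multinomial Finset.univ ⇑(α - β) : ℝ) * coeff β f)
        = ((∏ i, ((α i).factorial : ℝ)) * (Nat.multinomial Finset.univ ⇑(α - β) : ℝ))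
            * coeff β f := by ring
      _ = ((N.factorial : ℝ) * ∏ i, ((α i).descFactorial (β i) : ℝ)) * coeff β f := by
            rw [keyR]
      _ = (N.factorial : ℝ) * (coeff β f * ∏ i, ((α i).descFactorial (β i) : ℝ)) := by ring
  · rw [if_neg hle, mul_zero]
    have : ∃ i, α i < β i := by
      by_contra h
      push_neg at h
      exact hle fun i => h i
    obtain ⟨i, hi⟩ := this
    rw [Finset.prod_eq_zero (Finset.mem_univ i)
      (by rw [Nat.descFactorial_eq_zero_iff_lt.mpr hi, Nat.cast_zero]),
      mul_zero, mul_zero]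

-- scaling identity
lemma polya_scale {n : ℕ} (β α : Fin n →₀ ℕ) {d : ℕ} (hβd : (∑ i, β i) = d)
    {K : ℝ} (hK0 : 0 < K) :
    ∏ i, ((α i).descFactorial (β i) : ℝ)
      = K ^ d * ∏ i, ∏ j ∈ range (β i), ((α i : ℝ) / K - (j : ℝ) / K) := by
  have step : ∀ i : Fin n, ((α i).descFactorial (β i) : ℝ)
      = K ^ (β i) * ∏ j ∈ range (β i), ((α i : ℝ) / K - (j : ℝ) / K) := by
    intro i
    rw [polya_cast_descFactorial]
    have : ∀ j ∈ range (β i), ((α i : ℝ) - j) = K * ((α i : ℝ) / K - (j : ℝ) / K) := by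
      intro j _
      field_simp
    rw [Finset.prod_congr rfl this, Finset.prod_mul_distrib, Finset.prod_const, card_range]
  rw [Finset.prod_congr rfl fun i _ => step i, Finset.prod_mul_distrib,
    Finset.prod_pow_eq_pow_sum, hβd]

lemma polya_error {n : ℕ} (β : Fin n →₀ ℕ) {d : ℕ} (hβd : (∑ i, β i) = d)
    {K : ℝ} (hK0 : 0 < K) (hdK : (d : ℝ) ≤ K) (x : Fin n → ℝ)
    (hx0 : ∀ i, 0 ≤ x i) (hx1 : ∀ i, x i ≤ 1) :
    |∏ i, ∏ j ∈ range (β i), (x i - (j : ℝ) / K) - ∏ i, x i ^ β i|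
      ≤ d * (d / K) := by
  have hβle : ∀ i, β i ≤ d := by
    intro i
    rw [← hβd]
    exact Finset.single_le_sum (fun j _ => Nat.zero_le _) (mem_univ i)
  set s := (univ : Finset (Fin n)).sigma fun i => range (β i) with hs
  have hjd : ∀ p : (_ : Fin n) × ℕ, p ∈ s → (p.2 : ℝ) ≤ d := by
    intro p hp
    rw [hs, Finset.mem_sigma] at hp
    have : p.2 < β p.1 := mem_range.mp hp.2
    exact_mod_cast le_of_lt (lt_of_lt_of_le this (hβle p.1))
  have hjK : ∀ p : (_ : Fin n) × ℕ, p ∈ s → 0 ≤ (p.2 : ℝ) / K ∧ (p.2 : ℝ) / K ≤ 1 := by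
    intro p hp
    constructor
    · positivity
    · rw [div_le_one hK0]
      exact le_trans (hjd p hp) hdK
  have h1 : ∏ p ∈ s, (x p.1 - (p.2 : ℝ) / K)
      = ∏ i, ∏ j ∈ range (β i), (x i - (j : ℝ) / K) :=
    Finset.prod_sigma _ _ (fun p => x p.1 - (p.2 : ℝ) / K : (_ : Fin n) × ℕ → ℝ)
  have h2 : ∏ i, x i ^ β i = ∏ p ∈ s, x p.1 := by
    rw [Finset.prod_sigma]
    exact Finset.prod_congr rfl fun i _ => by simp [Finset.prod_const]
  rw [← h1, h2]
  calc |∏ p ∈ s, (x p.1 - (p.2 : ℝ) / K) - ∏ p ∈ s, x p.1|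
      ≤ ∑ p ∈ s, |x p.1 - (p.2 : ℝ) / K - x p.1| := by
        refine polya_abs_prod_sub_prod s _ _ (fun p hp => ?_) (fun p hp => ?_)
        · rw [abs_le]
          constructor
          · have := (hjK p hp).2
            have := hx0 p.1
            linarith
          · have := (hjK p hp).1
            have := hx1 p.1
            linarith
        · rw [abs_le]
          constructor
          · linarith [hx0 p.1]
          · exact hx1 p.1
    _ ≤ ∑ p ∈ s, (d : ℝ) / K := by
        refine Finset.sum_le_sum fun p hp => ?_
        have h3 : |x p.1 - (p.2 : ℝ) / K - x p.1| = (p.2 : ℝ) / K := by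
          rw [sub_sub_cancel_left, abs_neg, abs_of_nonneg (hjK p hp).1]
        rw [h3]
        exact div_le_div_of_nonneg_right (hjd p hp) hK0.le  -- check name
    _ = (s.card : ℝ) * ((d : ℝ) / K) := by rw [Finset.sum_const, nsmul_eq_mul]
    _ = d * (d / K) := by
        congr 1
        rw [Finset.card_sigma]
        simp only [Finset.card_range]
        exact_mod_cast hβd

/-- Pólya's Positivstellensatz: if a real form `f` is strictly positive on the standard
simplex, then all coefficients (with respect to monomials of degree `deg f + m`) of
`(x₁ + ⋯ + xₙ)^m * f` are strictly positive for some `m`. -/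
theorem polya_positivstellensatz {n : ℕ} (hn : 0 < n) {d : ℕ}
    (f : MvPolynomial (Fin n) ℝ) (hf : f.IsHomogeneous d)
    (hpos : ∀ x : Fin n → ℝ, (∀ i, 0 ≤ x i) → (∑ i, x i) = 1 → 0 < eval x f) :
    ∃ m : ℕ, ∀ α : Fin n →₀ ℕ, (α.sum fun _ e => e) = d + m →
      0 < coeff α ((∑ i, (X i : MvPolynomial (Fin n) ℝ)) ^ m * f) := by
  haveI : Nonempty (Fin n) := ⟨⟨0, hn⟩⟩
  -- minimum of f on the standard simplex
  obtain ⟨z, hzmem, hzmin⟩ := (isCompact_stdSimplex ℝ (Fin n)).exists_isMinOn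
    ⟨_, single_mem_stdSimplex ℝ (Classical.arbitrary (Fin n))⟩
    (MvPolynomial.continuous_eval f).continuousOn
  set ε := eval z f with hεdef
  have hε0 : 0 < ε := hpos z hzmem.1 hzmem.2
  set A := ∑ β ∈ f.support, |coeff β f| with hAdef
  have hA0 : 0 ≤ A := Finset.sum_nonneg fun _ _ => abs_nonneg _
  obtain ⟨N, hN⟩ := exists_nat_gt (A * d * d / ε)
  have hADnn : 0 ≤ A * d * d / ε := by positivity
  have hN0 : 0 < (N : ℝ) := lt_of_le_of_lt hADnn hN
  refine ⟨N, fun α hαsum => ?_⟩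
  have hα : (∑ i, α i) = d + N := by
    rw [← hαsum]
    exact (Finsupp.sum_fintype _ (fun _ e => e) fun _ => rfl).symm
  set K : ℝ := ((d + N : ℕ) : ℝ) with hKdef
  have hK0 : 0 < K := by
    rw [hKdef]
    push_cast
    linarith
  have hdK : (d : ℝ) ≤ K := by
    rw [hKdef]; push_cast; linarith
  have hNK : (N : ℝ) ≤ K := by
    rw [hKdef]; push_cast; linarith
  set x : Fin n → ℝ := fun i => (α i : ℝ) / K with hxdef
  have hx0 : ∀ i, 0 ≤ x i := fun i => div_nonneg (Nat.cast_nonneg _) hK0.le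
  have hsumcast : ∑ i, ((α i : ℕ) : ℝ) = K := by
    rw [hKdef, ← Nat.cast_sum]
    exact_mod_cast congrArg (Nat.cast : ℕ → ℝ) hα
  have hxsum : ∑ i, x i = 1 := by
    rw [hxdef, ← Finset.sum_div, hsumcast, div_self hK0.ne']
  have hx1 : ∀ i, x i ≤ 1 := by
    intro i
    rw [hxdef, div_le_one hK0, ← hsumcast]
    exact Finset.single_le_sum (f := fun i => ((α i : ℕ) : ℝ)) (fun j _ => Nat.cast_nonneg _) (mem_univ i)
  have hεx : ε ≤ eval x f := hzmin ⟨hx0, hxsum⟩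
  -- the two sums
  set S := ∑ β ∈ f.support, coeff β f * ∏ i, ∏ j ∈ range (β i), (x i - (j : ℝ) / K)
    with hSdef
  have hT : (∑ β ∈ f.support, coeff β f * ∏ i, ((α i).descFactorial (β i) : ℝ))
      = K ^ d * S := by
    rw [hSdef, Finset.mul_sum]
    refine Finset.sum_congr rfl fun β hβ => ?_
    rw [polya_scale β α (polya_support_degree hf hβ) hK0]
    ring
  have herr : |S - eval x f| ≤ A * (d * (d / K)) := by
    rw [eval_eq', hSdef, ← Finset.sum_sub_distrib]
    calc |∑ β ∈ f.support, (coeff β f * ∏ i, ∏ j ∈ range (β i), (x i - (j : ℝ) / K)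
            - coeff β f * ∏ i, x i ^ β i)|
        ≤ ∑ β ∈ f.support, |coeff β f * ∏ i, ∏ j ∈ range (β i), (x i - (j : ℝ) / K)
            - coeff β f * ∏ i, x i ^ β i| := Finset.abs_sum_le_sum_abs _ _
      _ ≤ ∑ β ∈ f.support, |coeff β f| * (d * (d / K)) := by
          refine Finset.sum_le_sum fun β hβ => ?_
          rw [← mul_sub, abs_mul]
          exact mul_le_mul_of_nonneg_left
            (polya_error β (polya_support_degree hf hβ) hK0 hdK x hx0 hx1) (abs_nonneg _)
      _ = A * (d * (d / K)) := by rw [hAdef, Finset.sum_mul]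
  have hsmall : A * ((d : ℝ) * ((d : ℝ) / K)) < ε := by
    rw [div_lt_iff₀ hε0] at hN
    have h2 : (N : ℝ) * ε ≤ K * ε := mul_le_mul_of_nonneg_right hNK hε0.le
    rw [show A * ((d : ℝ) * ((d : ℝ) / K)) = A * (d : ℝ) * (d : ℝ) / K by ring,
      div_lt_iff₀ hK0]
    nlinarith [hN, h2, hK0, hε0]
  have hS0 : 0 < S := by
    have : ε ≤ eval x f := hεx
    have habs := abs_sub_abs_le_abs_sub S (eval x f)
    have h2 : eval x f - S ≤ |S - eval x f| := by
      rw [abs_sub_comm]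
      exact le_abs_self _
    linarith
  have hTpos : 0 < K ^ d * S := mul_pos (pow_pos hK0 d) hS0
  have hformula := polya_coeff_formula f hf α hα
  rw [hT] at hformula
  have hfact : 0 < ∏ i, ((α i).factorial : ℝ) :=
    Finset.prod_pos fun i _ => by exact_mod_cast (α i).factorial_pos
  have hNfact : (0 : ℝ) < N.factorial := by exact_mod_cast N.factorial_pos
  nlinarith [hformula, mul_pos hNfact hTpos, hfact]
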